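/- Bonnet–Myers type diameter bound: for distinct x, y ∈ V with κ(x,y) > 0, one has d(x,y) ≤ ℋ(x,y)/κ(x,y). Consequently, if inf_{y≠x}κ(x,y) ≥ K > 0 and sup_{y≠x}ℋ(x,y) ≤ Λ for some Λ ≥ 2, then the inscribed radius InRad_x V := sup_y d(x,y) satisfies InRad_x V ≤ Λ/K. -/

import Mathlib

open Finset Filter Topology MeasureTheory
open scoped Classical

noncomputable section

variable {V : Type*}

/-- Vertex weight `μ(x) = Σ_y μ_{xy}`. -/
def vdeg [Fintype V] (μ : V → V → ℝ) (x : V) : ℝ := ∑ y, μ x y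

/-- Transition probability kernel `P(x,y) = μ_{xy}/μ(x)`. -/
def transP [Fintype V] (μ : V → V → ℝ) (x y : V) : ℝ := μ x y / vdeg μ x

/-- `m` is the Perron measure of `(V,μ)`. -/
def IsPerron [Fintype V] (μ : V → V → ℝ) (m : V → ℝ) : Prop :=
  (∀ x, 0 < m x) ∧ (∑ x, m x = 1) ∧ ∀ x, m x = ∑ y, m y * transP μ y x

/-- Mean transition probability kernel `𝒫 = (P + ←P)/2`. -/
def meanK [Fintype V] (μ : V → V → ℝ) (m : V → ℝ) (x y : V) : ℝ :=
  (transP μ x y + m y / m x * transP μ y x) / 2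

/-- There is a directed path of length `n` from `x` to `y`. -/
def HasPathLen (μ : V → V → ℝ) (x y : V) (n : ℕ) : Prop :=
  ∃ c : ℕ → V, c 0 = x ∧ c n = y ∧ ∀ i < n, 0 < μ (c i) (c (i + 1))

/-- The (non-symmetric) graph distance. -/
def gdist (μ : V → V → ℝ) (x y : V) : ℝ :=
  sInf {r : ℝ | ∃ n : ℕ, (r : ℝ) = (n : ℝ) ∧ HasPathLen μ x y n}

/-- The graph is simple: no loops. -/
def IsSimpleW (μ : V → V → ℝ) : Prop := ∀ x, μ x x = 0

/-- The edge weight is nonnegative. -/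
def Nonneg (μ : V → V → ℝ) : Prop := ∀ x y, 0 ≤ μ x y

/-- The graph is strongly connected. -/
def StronglyConnectedW (μ : V → V → ℝ) : Prop := ∀ x y, ∃ n, HasPathLen μ x y n

/-- `π` is a coupling of the probability measures `ν₀, ν₁`. -/
def IsCoupling [Fintype V] (π : V → V → ℝ) (ν₀ ν₁ : V → ℝ) : Prop :=
  (∀ x y, 0 ≤ π x y) ∧ (∀ x, ∑ y, π x y = ν₀ x) ∧ (∀ y, ∑ x, π x y = ν₁ y)

/-- The L¹-Wasserstein distance with cost `d`. -/
def Wass [Fintype V] (d : V → V → ℝ) (ν₀ ν₁ : V → ℝ) : ℝ :=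
  sInf {c : ℝ | ∃ π, IsCoupling π ν₀ ν₁ ∧ c = ∑ x, ∑ y, d x y * π x y}

/-- The probability measure `ν^ε_x`. -/
def nu [Fintype V] (P : V → V → ℝ) (ε : ℝ) (x z : V) : ℝ :=
  if z = x then 1 - ε else ε * P x z

/-- `κ_ε(x,y) = 1 − W(ν^ε_x, ν^ε_y)/d(x,y)`. -/
def kappaEps [Fintype V] (μ : V → V → ℝ) (m : V → ℝ) (ε : ℝ) (x y : V) : ℝ :=
  1 - Wass (gdist μ) (nu (meanK μ m) ε x) (nu (meanK μ m) ε y) / gdist μ x y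

/-- The (positive) Chung Laplacian associated with a kernel `P`. -/
def chungL [Fintype V] (P : V → V → ℝ) (f : V → ℝ) (x : V) : ℝ :=
  f x - ∑ y, P x y * f y

/-- The negative Laplacian `Δ = −ℒ`. -/
def negL [Fintype V] (P : V → V → ℝ) (f : V → ℝ) (x : V) : ℝ :=
  (∑ y, P x y * f y) - f x

/-- `f` is 1-Lipschitz with respect to the non-symmetric distance `d`. -/
def Lip1 (d : V → V → ℝ) (f : V → ℝ) : Prop := ∀ x y, f y - f x ≤ d x y

/-- The asymptotic mean curvature `ℋ_x = ℒρ_x(x)`. -/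
def Hout [Fintype V] (μ : V → V → ℝ) (m : V → ℝ) (x : V) : ℝ :=
  chungL (meanK μ m) (fun y => gdist μ x y) x

/-- The reverse asymptotic mean curvature `←ℋ_x = ℒ←ρ_x(x)`. -/
def Hin [Fintype V] (μ : V → V → ℝ) (m : V → ℝ) (x : V) : ℝ :=
  chungL (meanK μ m) (fun y => gdist μ y x) x

/-- The mixed asymptotic mean curvature `ℋ(x,y) = −(ℋ_x + ←ℋ_y)`. -/
def Hmix [Fintype V] (μ : V → V → ℝ) (m : V → ℝ) (x y : V) : ℝ :=
  -(Hout μ m x + Hin μ m y)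

/-- The neighborhood `𝒩_x = N_x ∪ ←N_x`. -/
def nbr [Fintype V] (μ : V → V → ℝ) (x : V) : Finset V :=
  Finset.univ.filter (fun y => 0 < μ x y ∨ 0 < μ y x)
section AuxPath

variable {V : Type*}

lemma hasPathLen_refl (μ : V → V → ℝ) (x : V) : HasPathLen μ x x 0 :=
  ⟨fun _ => x, rfl, rfl, fun i hi => absurd hi (Nat.not_lt_zero i)⟩

lemma hasPathLen_extend {μ : V → V → ℝ} {x w y : V} {n : ℕ}
    (h : HasPathLen μ x w n) (he : 0 < μ w y) : HasPathLen μ x y (n + 1) := by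
  obtain ⟨c, hc0, hcn, hce⟩ := h
  refine ⟨fun i => if i ≤ n then c i else y, by simp [hc0], by simp, ?_⟩
  intro i hi
  rcases lt_or_eq_of_le (Nat.lt_succ_iff.mp hi) with h' | h'
  · simp only [if_pos (le_of_lt h'), if_pos (Nat.succ_le_of_lt h')]
    exact hce i h'
  · subst h'
    show 0 < μ (if i ≤ i then c i else y) (if i + 1 ≤ i then c (i + 1) else y)
    rw [if_pos le_rfl, if_neg (Nat.not_succ_le_self i), hcn]
    exact he

lemma hasPathLen_trans {μ : V → V → ℝ} {x z y : V} {n₁ n₂ : ℕ}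
    (h1 : HasPathLen μ x z n₁) (h2 : HasPathLen μ z y n₂) :
    HasPathLen μ x y (n₁ + n₂) := by
  induction n₂ generalizing y with
  | zero =>
    obtain ⟨c, hc0, hcn, _⟩ := h2
    have : y = z := by rw [← hcn, hc0]
    subst this
    exact h1
  | succ n ih =>
    obtain ⟨c, hc0, hcn, hce⟩ := h2
    have hmid : HasPathLen μ z (c n) n :=
      ⟨c, hc0, rfl, fun i hi => hce i (hi.trans (Nat.lt_succ_self n))⟩
    have hedge : 0 < μ (c n) y := by
      rw [← hcn]; exact hce n (Nat.lt_succ_self n)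
    exact hasPathLen_extend (ih hmid) hedge

end AuxPath

section AuxDist

variable {V : Type*}

lemma gdist_eq_natInf {μ : V → V → ℝ} {x y : V}
    (hne : {n : ℕ | HasPathLen μ x y n}.Nonempty) :
    gdist μ x y = (sInf {n : ℕ | HasPathLen μ x y n} : ℕ) := by
  set S := {n : ℕ | HasPathLen μ x y n}
  have hmem : ((sInf S : ℕ) : ℝ) ∈ {r : ℝ | ∃ n : ℕ, (r : ℝ) = (n : ℝ) ∧ HasPathLen μ x y n} :=
    ⟨sInf S, rfl, Nat.sInf_mem hne⟩
  have hbdd : BddBelow {r : ℝ | ∃ n : ℕ, (r : ℝ) = (n : ℝ) ∧ HasPathLen μ x y n} := by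
    refine ⟨0, ?_⟩
    rintro r ⟨n, rfl, -⟩
    exact Nat.cast_nonneg n
  refine le_antisymm (csInf_le hbdd hmem) (le_csInf ⟨_, hmem⟩ ?_)
  rintro r ⟨n, rfl, hn⟩
  exact_mod_cast Nat.sInf_le hn

lemma gdist_self {μ : V → V → ℝ} (x : V) : gdist μ x x = 0 := by
  have hne : {n : ℕ | HasPathLen μ x x n}.Nonempty := ⟨0, hasPathLen_refl μ x⟩
  rw [gdist_eq_natInf hne]
  have : sInf {n : ℕ | HasPathLen μ x x n} = 0 :=
    Nat.eq_zero_of_le_zero (Nat.sInf_le (hasPathLen_refl μ x))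
  simp [this]

lemma gdist_nonneg {μ : V → V → ℝ} (hconn : StronglyConnectedW μ) (x y : V) :
    0 ≤ gdist μ x y := by
  rw [gdist_eq_natInf (hconn x y)]
  exact Nat.cast_nonneg _

lemma gdist_le_of_path {μ : V → V → ℝ} {x y : V} {n : ℕ} (h : HasPathLen μ x y n) :
    gdist μ x y ≤ n := by
  rw [gdist_eq_natInf ⟨n, h⟩]
  exact_mod_cast Nat.sInf_le h

lemma one_le_gdist {μ : V → V → ℝ} (hconn : StronglyConnectedW μ) {x y : V} (hxy : y ≠ x) :
    1 ≤ gdist μ x y := by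
  rw [gdist_eq_natInf (hconn x y)]
  have hmem : HasPathLen μ x y (sInf {n : ℕ | HasPathLen μ x y n}) :=
    Nat.sInf_mem (hconn x y)
  have : sInf {n : ℕ | HasPathLen μ x y n} ≠ 0 := by
    intro h0
    rw [h0] at hmem
    obtain ⟨c, hc0, hcn, -⟩ := hmem
    exact hxy (by rw [← hcn, hc0])
  exact_mod_cast Nat.one_le_iff_ne_zero.mpr this

lemma gdist_triangle {μ : V → V → ℝ} (hconn : StronglyConnectedW μ) (x z y : V) :
    gdist μ x y ≤ gdist μ x z + gdist μ z y := by
  have h1 := Nat.sInf_mem (hconn x z)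
  have h2 := Nat.sInf_mem (hconn z y)
  rw [gdist_eq_natInf (hconn x z), gdist_eq_natInf (hconn z y), ← Nat.cast_add]
  exact gdist_le_of_path (hasPathLen_trans h1 h2)

lemma gdist_lip {μ : V → V → ℝ} (hconn : StronglyConnectedW μ) (x : V) :
    Lip1 (gdist μ) (fun z => gdist μ x z) := by
  intro a b
  have := gdist_triangle hconn x a b
  simp only []
  linarith

end AuxDist
section AuxProb

variable {V : Type*} [Fintype V]

lemma vdeg_pos {μ : V → V → ℝ} {m : V → ℝ} (hnn : Nonneg μ) (hm : IsPerron μ m) (x : V) :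
    0 < vdeg μ x := by
  obtain ⟨hmpos, hmsum, hmeq⟩ := hm
  by_contra hcon
  have hv0 : vdeg μ x = 0 :=
    le_antisymm (not_lt.mp hcon) (Finset.sum_nonneg fun y _ => hnn x y)
  -- every transP x y = 0
  have htx : ∀ y, transP μ x y = 0 := by
    intro y
    simp [transP, hv0]
  -- row sums of transP are at most 1
  have hrow : ∀ z, ∑ y, transP μ z y ≤ 1 := by
    intro z
    have : ∑ y, transP μ z y = vdeg μ z / vdeg μ z := by
      simp [transP, ← Finset.sum_div, vdeg]
    rw [this]
    rcases eq_or_ne (vdeg μ z) 0 with h | h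
    · simp [h]
    · simp [div_self h]
  have h1 : (1 : ℝ) = ∑ z, m z * ∑ y, transP μ z y := by
    calc (1 : ℝ) = ∑ y, m y := hmsum.symm
    _ = ∑ y, ∑ z, m z * transP μ z y := by
        exact Finset.sum_congr rfl fun y _ => hmeq y
    _ = ∑ z, ∑ y, m z * transP μ z y := Finset.sum_comm
    _ = ∑ z, m z * ∑ y, transP μ z y := by
        exact Finset.sum_congr rfl fun z _ => (Finset.mul_sum _ _ _).symm
  have hlt : ∑ z, m z * ∑ y, transP μ z y < ∑ z, m z := by
    apply Finset.sum_lt_sum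
    · intro z _
      calc m z * ∑ y, transP μ z y ≤ m z * 1 :=
        mul_le_mul_of_nonneg_left (hrow z) (hmpos z).le
      _ = m z := mul_one _
    · refine ⟨x, Finset.mem_univ x, ?_⟩
      simp [htx]
      exact hmpos x
  rw [hmsum] at hlt
  linarith [h1]

lemma transP_nonneg {μ : V → V → ℝ} (hnn : Nonneg μ) (x y : V) : 0 ≤ transP μ x y := by
  rcases le_or_gt (vdeg μ x) 0 with h | h
  · have : vdeg μ x = 0 := le_antisymm h (Finset.sum_nonneg fun y _ => hnn x y)
    simp [transP, this]
  · exact div_nonneg (hnn x y) h.le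

lemma transP_sum {μ : V → V → ℝ} (hv : 0 < vdeg μ x) : ∑ y, transP μ x y = 1 := by
  simp [transP, ← Finset.sum_div, vdeg]
  exact (by have h := hv.ne'; unfold vdeg at h; exact h)

lemma meanK_nonneg {μ : V → V → ℝ} {m : V → ℝ} (hnn : Nonneg μ) (hm : IsPerron μ m) (x y : V) :
    0 ≤ meanK μ m x y := by
  have h1 := transP_nonneg hnn x y
  have h2 := transP_nonneg hnn y x
  have h3 : 0 ≤ m y / m x := div_nonneg (hm.1 y).le (hm.1 x).le
  have := mul_nonneg h3 h2
  unfold meanK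
  positivity

lemma meanK_self {μ : V → V → ℝ} {m : V → ℝ} (hsimple : IsSimpleW μ) (x : V) :
    meanK μ m x x = 0 := by
  simp [meanK, transP, hsimple x]

lemma meanK_sum {μ : V → V → ℝ} {m : V → ℝ} (hnn : Nonneg μ) (hm : IsPerron μ m) (x : V) :
    ∑ y, meanK μ m x y = 1 := by
  obtain ⟨hmpos, hmsum, hmeq⟩ := hm
  have hv : ∀ z, 0 < vdeg μ z := vdeg_pos hnn ⟨hmpos, hmsum, hmeq⟩
  have h1 : ∑ y, transP μ x y = 1 := transP_sum (hv x)
  have h2 : ∑ y, m y / m x * transP μ y x = 1 := by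
    have : ∑ y, m y / m x * transP μ y x = (∑ y, m y * transP μ y x) / m x := by
      rw [Finset.sum_div]
      exact Finset.sum_congr rfl fun y _ => by ring
    rw [this, ← hmeq x, div_self (hmpos x).ne']
  unfold meanK
  rw [← Finset.sum_div, Finset.sum_add_distrib, h1, h2]
  norm_num

lemma nu_nonneg {P : V → V → ℝ} (hP : ∀ x y, 0 ≤ P x y) {ε : ℝ} (hε0 : 0 ≤ ε) (hε1 : ε ≤ 1)
    (x z : V) : 0 ≤ nu P ε x z := by
  unfold nu
  split
  · linarith
  · exact mul_nonneg hε0 (hP x z)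

lemma nu_sum {P : V → V → ℝ} {x : V} (hPx : P x x = 0) (hPsum : ∑ z, P x z = 1) (ε : ℝ) :
    ∑ z, nu P ε x z = 1 := by
  have : ∀ z, nu P ε x z = ε * P x z + (if z = x then 1 - ε else 0) := by
    intro z
    unfold nu
    by_cases h : z = x
    · subst h; simp [hPx]
    · simp [h]
  rw [Finset.sum_congr rfl fun z _ => this z, Finset.sum_add_distrib, ← Finset.mul_sum, hPsum,
    Finset.sum_ite_eq' Finset.univ x fun _ => (1 : ℝ) - ε]
  simp

lemma coupling_exists {ν₀ ν₁ : V → ℝ} (h0 : ∀ z, 0 ≤ ν₀ z) (h1 : ∀ z, 0 ≤ ν₁ z)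
    (hs0 : ∑ z, ν₀ z = 1) (hs1 : ∑ z, ν₁ z = 1) :
    IsCoupling (fun a b => ν₀ a * ν₁ b) ν₀ ν₁ := by
  refine ⟨fun a b => mul_nonneg (h0 a) (h1 b), fun a => ?_, fun b => ?_⟩
  · rw [← Finset.mul_sum, hs1, mul_one]
  · rw [← Finset.sum_mul, hs0, one_mul]

lemma kantorovich_bound {d : V → V → ℝ} {f : V → ℝ} (hf : Lip1 d f)
    {π : V → V → ℝ} {ν₀ ν₁ : V → ℝ} (hπ : IsCoupling π ν₀ ν₁) :
    (∑ z, f z * ν₁ z) - ∑ z, f z * ν₀ z ≤ ∑ a, ∑ b, d a b * π a b := by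
  obtain ⟨hnn, hm0, hm1⟩ := hπ
  have step : ∑ a, ∑ b, (f b - f a) * π a b ≤ ∑ a, ∑ b, d a b * π a b := by
    refine Finset.sum_le_sum fun a _ => Finset.sum_le_sum fun b _ => ?_
    exact mul_le_mul_of_nonneg_right (hf a b) (hnn a b)
  have lhs : ∑ a, ∑ b, (f b - f a) * π a b = (∑ z, f z * ν₁ z) - ∑ z, f z * ν₀ z := by
    have e1 : ∑ a, ∑ b, (f b - f a) * π a b
        = (∑ a, ∑ b, f b * π a b) - ∑ a, ∑ b, f a * π a b := by
      rw [← Finset.sum_sub_distrib]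
      refine Finset.sum_congr rfl fun a _ => ?_
      rw [← Finset.sum_sub_distrib]
      exact Finset.sum_congr rfl fun b _ => by ring
    rw [e1]
    congr 1
    · rw [Finset.sum_comm]
      refine Finset.sum_congr rfl fun b _ => ?_
      rw [← hm1 b, Finset.mul_sum]
    · refine Finset.sum_congr rfl fun a _ => ?_
      rw [← hm0 a, Finset.mul_sum]
  linarith [step, lhs.ge]

lemma wass_ge {d : V → V → ℝ} {f : V → ℝ} (hf : Lip1 d f) {ν₀ ν₁ : V → ℝ}
    (h0 : ∀ z, 0 ≤ ν₀ z) (h1 : ∀ z, 0 ≤ ν₁ z)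
    (hs0 : ∑ z, ν₀ z = 1) (hs1 : ∑ z, ν₁ z = 1) :
    (∑ z, f z * ν₁ z) - ∑ z, f z * ν₀ z ≤ Wass d ν₀ ν₁ := by
  refine le_csInf ⟨_, ⟨_, coupling_exists h0 h1 hs0 hs1, rfl⟩⟩ ?_
  rintro c ⟨π, hπ, rfl⟩
  exact kantorovich_bound hf hπ

lemma inner_nu {P : V → V → ℝ} {w : V} (hPw : P w w = 0) (f : V → ℝ) (ε : ℝ) :
    ∑ z, f z * nu P ε w z = f w + ε * negL P f w := by
  have : ∀ z, f z * nu P ε w z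
      = ε * (P w z * f z) + (if z = w then (1 - ε) * f w else 0) := by
    intro z
    unfold nu
    by_cases h : z = w
    · subst h; simp [hPw]; ring
    · simp [h]; ring
  rw [Finset.sum_congr rfl fun z _ => this z, Finset.sum_add_distrib, ← Finset.mul_sum,
    Finset.sum_ite_eq' Finset.univ w fun _ => (1 - ε) * f w]
  simp [negL]
  ring

end AuxProb
/-- Bonnet–Myers type diameter bound and inscribed radius bound. -/
theorem bonnet_myers
    {V : Type*} [Fintype V] [Nonempty V] (μ : V → V → ℝ) (m : V → ℝ)
    (hnn : Nonneg μ) (hsimple : IsSimpleW μ) (hconn : StronglyConnectedW μ)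
    (hm : IsPerron μ m) (x : V) (κ : V → ℝ)
    (hκ : ∀ y : V, y ≠ x →
      Tendsto (fun ε => kappaEps μ m ε x y / ε) (𝓝[>] (0:ℝ)) (𝓝 (κ y)))
    (K Λ : ℝ) (hK : 0 < K) (hΛ : 2 ≤ Λ)
    (hKb : ∀ y : V, y ≠ x → K ≤ κ y)
    (hΛb : ∀ y : V, y ≠ x → Hmix μ m x y ≤ Λ) :
    (∀ y : V, y ≠ x → 0 < κ y → gdist μ x y ≤ Hmix μ m x y / κ y) ∧
    Finset.univ.sup' Finset.univ_nonempty (fun y => gdist μ x y) ≤ Λ / K := by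
  have hPnn : ∀ a b, 0 ≤ meanK μ m a b := meanK_nonneg hnn hm
  have hPdiag : ∀ w, meanK μ m w w = 0 := fun w => meanK_self hsimple w
  have hPsum : ∀ w, ∑ z, meanK μ m w z = 1 := fun w => meanK_sum hnn hm w
  have key : ∀ y : V, y ≠ x → ∀ ε : ℝ, 0 < ε → ε ≤ 1 →
      kappaEps μ m ε x y / ε ≤ Hmix μ m x y / gdist μ x y := by
    intro y hy ε hε0 hε1
    have hd1 : 1 ≤ gdist μ x y := one_le_gdist hconn hy
    have hd0 : 0 < gdist μ x y := by linarith
    have hf : Lip1 (gdist μ) (fun z => gdist μ x z) := gdist_lip hconn x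
    have hWl := wass_ge hf (fun z => nu_nonneg hPnn hε0.le hε1 x z)
      (fun z => nu_nonneg hPnn hε0.le hε1 y z)
      (nu_sum (hPdiag x) (hPsum x) ε) (nu_sum (hPdiag y) (hPsum y) ε)
    rw [inner_nu (hPdiag y), inner_nu (hPdiag x)] at hWl
    simp only [negL, gdist_self] at hWl
    -- hWl : (d + ε*(B − d)) − (0 + ε*(A − 0)) ≤ W
    -- triangle comparison: d − C ≤ B
    have hB : gdist μ x y - ∑ z, meanK μ m y z * gdist μ z y
        ≤ ∑ z, meanK μ m y z * gdist μ x z := by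
      have h2 : ∑ z, meanK μ m y z * (gdist μ x y - gdist μ z y)
          ≤ ∑ z, meanK μ m y z * gdist μ x z := by
        refine Finset.sum_le_sum fun z _ => mul_le_mul_of_nonneg_left ?_ (hPnn y z)
        have := gdist_triangle hconn x z y
        linarith
      have h3 : ∑ z, meanK μ m y z * (gdist μ x y - gdist μ z y)
          = gdist μ x y - ∑ z, meanK μ m y z * gdist μ z y := by
        rw [Finset.sum_congr rfl fun z _ => mul_sub (meanK μ m y z) _ _,
          Finset.sum_sub_distrib, ← Finset.sum_mul, hPsum y, one_mul]
      linarith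
    have hεB : ε * (gdist μ x y - ∑ z, meanK μ m y z * gdist μ z y)
        ≤ ε * ∑ z, meanK μ m y z * gdist μ x z :=
      mul_le_mul_of_nonneg_left hB hε0.le
    have hW : gdist μ x y - ε * Hmix μ m x y
        ≤ Wass (gdist μ) (nu (meanK μ m) ε x) (nu (meanK μ m) ε y) := by
      simp only [Hmix, Hout, Hin, chungL, gdist_self]
      ring_nf
      ring_nf at hWl hεB
      linarith
    have hκε : kappaEps μ m ε x y ≤ ε * Hmix μ m x y / gdist μ x y := by
      have h2 : (gdist μ x y - ε * Hmix μ m x y) / gdist μ x y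
          ≤ Wass (gdist μ) (nu (meanK μ m) ε x) (nu (meanK μ m) ε y) / gdist μ x y := by
        gcongr
      rw [sub_div, div_self hd0.ne'] at h2
      unfold kappaEps
      linarith
    calc kappaEps μ m ε x y / ε ≤ (ε * Hmix μ m x y / gdist μ x y) / ε := by gcongr
    _ = Hmix μ m x y / gdist μ x y := by
        field_simp
  have hlim : ∀ y : V, y ≠ x → κ y ≤ Hmix μ m x y / gdist μ x y := by
    intro y hy
    refine le_of_tendsto (hκ y hy) ?_
    filter_upwards [Ioo_mem_nhdsGT_of_mem
      (show (0:ℝ) ∈ Set.Ico (0:ℝ) 1 from ⟨le_refl _, one_pos⟩)] with ε hε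
    exact key y hy ε hε.1 hε.2.le
  have hmain : ∀ y : V, y ≠ x → 0 < κ y → gdist μ x y ≤ Hmix μ m x y / κ y := by
    intro y hy hκy
    have hd0 : 0 < gdist μ x y := lt_of_lt_of_le one_pos (one_le_gdist hconn hy)
    have h1 := hlim y hy
    rw [le_div_iff₀ hd0] at h1
    rw [le_div_iff₀ hκy]
    nlinarith [h1]
  refine ⟨hmain, Finset.sup'_le _ _ fun y _ => ?_⟩
  by_cases hy : y = x
  · subst hy
    rw [gdist_self]
    exact div_nonneg (by linarith) hK.le
  · have hκy : 0 < κ y := lt_of_lt_of_le hK (hKb y hy)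
    have h1 := hmain y hy hκy
    have h2 : Hmix μ m x y / κ y ≤ Λ / K :=
      div_le_div₀ (by linarith) (hΛb y hy) hK (hKb y hy)
    linarith
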